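/- arXiv:2005.02897 — 4 statements merged into one kernel-verified Lean document; each statement's English description precedes it below -/
import Mathlib

section
/- Let B be a contraction on ℂⁿ, α a unitary n×n matrix, e, f ∈ ℂⁿ with B e = α* e and B f = f (where B acts isometrically on e, being equal to α* e with ‖α* e‖ = ‖e‖). Then f is orthogonal to (I − α*) e. -/
open scoped Matrix.Norms.L2Operator Matrix

theorem orthogonal_of_fixed_vectors {n : ℕ}
    (B : Matrix (Fin n) (Fin n) ℂ) (hB : ‖B‖ ≤ 1)
    (α : Matrix.unitaryGroup (Fin n) ℂ)
    (e f : EuclideanSpace ℂ (Fin n))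
    (he : Matrix.toEuclideanLin B e = Matrix.toEuclideanLin ((α : Matrix (Fin n) (Fin n) ℂ)ᴴ) e)
    (hf : Matrix.toEuclideanLin B f = f) :
    inner ℂ (Matrix.toEuclideanLin ((1 : Matrix (Fin n) (Fin n) ℂ) - (α : Matrix (Fin n) (Fin n) ℂ)ᴴ) e) f = (0 : ℂ) := by
  set T : EuclideanSpace ℂ (Fin n) →L[ℂ] EuclideanSpace ℂ (Fin n) :=
    Matrix.toEuclideanCLM (𝕜 := ℂ) B with hT
  have hTapp : ∀ x, T x = Matrix.toEuclideanLin B x := fun x => rfl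
  have hTnorm : ‖T‖ ≤ 1 := by
    rw [hT, ← Matrix.cstar_norm_def]; exact hB
  have hTf : T f = f := by rw [hTapp]; exact hf
  -- the adjoint also fixes f
  have hadj : ContinuousLinearMap.adjoint T f = f := by
    have h1 : ‖ContinuousLinearMap.adjoint T f‖ ≤ ‖f‖ := by
      calc ‖ContinuousLinearMap.adjoint T f‖ ≤ ‖ContinuousLinearMap.adjoint T‖ * ‖f‖ :=
            (ContinuousLinearMap.adjoint T).le_opNorm f
        _ ≤ 1 * ‖f‖ := by
            apply mul_le_mul_of_nonneg_right _ (norm_nonneg f)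
            rw [ContinuousLinearMap.adjoint.norm_map]; exact hTnorm
        _ = ‖f‖ := one_mul _
    have h2 : (inner ℂ (ContinuousLinearMap.adjoint T f) f : ℂ) = (‖f‖ : ℂ) ^ 2 := by
      rw [ContinuousLinearMap.adjoint_inner_left, hTf, inner_self_eq_norm_sq_to_K]
      norm_cast
    have h3 : ‖ContinuousLinearMap.adjoint T f - f‖ ^ 2 ≤ 0 := by
      rw [@norm_sub_sq ℂ]
      have h2' : RCLike.re (inner ℂ (ContinuousLinearMap.adjoint T f) f : ℂ) = ‖f‖ ^ 2 := by
        rw [h2, ← Complex.ofReal_pow]; exact Complex.ofReal_re _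
      rw [h2']
      nlinarith [sq_nonneg ‖f‖, norm_nonneg (ContinuousLinearMap.adjoint T f), norm_nonneg f]
    have h4 : ContinuousLinearMap.adjoint T f - f = 0 := by
      have := sq_nonneg ‖ContinuousLinearMap.adjoint T f - f‖
      have : ‖ContinuousLinearMap.adjoint T f - f‖ = 0 := by nlinarith
      exact norm_eq_zero.mp this
    exact sub_eq_zero.mp h4
  have key : (inner ℂ (Matrix.toEuclideanLin ((α : Matrix (Fin n) (Fin n) ℂ)ᴴ) e) f : ℂ)
      = inner ℂ e f := by
    rw [← he, ← hTapp, ← ContinuousLinearMap.adjoint_inner_right, hadj]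
  have h1e : Matrix.toEuclideanLin (1 : Matrix (Fin n) (Fin n) ℂ) e = e := by
    ext i; simp [Matrix.toEuclideanLin_apply, Matrix.one_mulVec]
  rw [map_sub, LinearMap.sub_apply, inner_sub_left, key, h1e, sub_self]
end

section
/- Let A = A* be a positive definite n×n matrix. Then there exist δ > 0 and c > 0 such that for any matrix Ã with ‖A − Ã‖ < δ and any vectors x, y ∈ ℂⁿ with ⟨Ã x, y⟩ = 0, one has ‖x − y‖² ≥ c(‖x‖² + ‖y‖²). -/
open scoped Matrix.Norms.L2Operator ComplexOrder

lemma norm_toEuclideanLin_le {n : ℕ} (M : Matrix (Fin n) (Fin n) ℂ)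
    (x : EuclideanSpace ℂ (Fin n)) : ‖Matrix.toEuclideanLin M x‖ ≤ ‖M‖ * ‖x‖ :=
  M.l2_opNorm_mulVec x

lemma arith_aux (m K a b d : ℝ) (hm : 0 < m) (hK : 0 < K)
    (h1 : m * a ^ 2 ≤ K * d * a + m / 2 * (a * b))
    (h2 : m * b ^ 2 ≤ m / 2 * (a * b) + K * d * b) :
    m ^ 2 / (8 * K ^ 2) * (a ^ 2 + b ^ 2) ≤ d ^ 2 := by
  have hs : m * (a ^ 2 + b ^ 2) / 2 ≤ K * d * (a + b) := by nlinarith [sq_nonneg (a - b)]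
  have hL : 0 ≤ m * (a ^ 2 + b ^ 2) / 2 := by positivity
  have hsq : (m * (a ^ 2 + b ^ 2) / 2) ^ 2 ≤ (K * d * (a + b)) ^ 2 := pow_le_pow_left₀ hL hs 2
  rcases eq_or_lt_of_le (by positivity : (0:ℝ) ≤ a ^ 2 + b ^ 2) with h | h
  · have : m ^ 2 / (8 * K ^ 2) * (a ^ 2 + b ^ 2) = 0 := by rw [← h]; ring
    rw [this]; positivity
  · rw [div_mul_eq_mul_div, div_le_iff₀ (by positivity)]
    nlinarith [hsq, sq_nonneg (a - b), mul_pos h h,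
      mul_nonneg (mul_nonneg (sq_nonneg K) (sq_nonneg d)) (sq_nonneg (a - b))]

lemma coercive {n : ℕ} (A : Matrix (Fin n) (Fin n) ℂ) (hA : A.PosDef) :
    ∃ m > (0:ℝ), ∀ x : EuclideanSpace ℂ (Fin n),
      m * ‖x‖ ^ 2 ≤ Complex.re (inner ℂ (Matrix.toEuclideanLin A x) x) := by
  rcases Nat.eq_zero_or_pos n with hn | hn
  · refine ⟨1, one_pos, fun x => ?_⟩
    subst hn
    have hx : x = 0 := Subsingleton.elim x 0
    simp [hx]
  · haveI : Nonempty (Fin n) := Fin.pos_iff_nonempty.mp hn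
    set B := hA.1.eigenvectorBasis with hB
    set μ := hA.1.eigenvalues with hμ
    set T := Matrix.toEuclideanLin A with hT
    obtain ⟨i₀, -, hmin⟩ :=
      Finset.exists_min_image Finset.univ μ ⟨Classical.arbitrary _, Finset.mem_univ _⟩
    refine ⟨μ i₀, hA.eigenvalues_pos i₀, fun x => ?_⟩
    have hsymm : T.IsSymmetric := Matrix.isHermitian_iff_isSymmetric.1 hA.1
    have hTB : ∀ j, T (B j) = (μ j : ℂ) • B j := by
      intro j
      apply (WithLp.equiv 2 _).injective
      ext k
      have := congrFun (hA.1.mulVec_eigenvectorBasis j) k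
      simpa [hT, hB, hμ, Matrix.toEuclideanLin_apply] using this
    have key : ∀ (v w : EuclideanSpace ℂ (Fin n)),
        (inner ℂ v w : ℂ) = ∑ j, (starRingEnd ℂ) (B.repr v j) * B.repr w j := by
      intro v w
      have h1 : (inner ℂ v w : ℂ) = inner ℂ (B.repr v) (B.repr w) :=
        (B.repr.inner_map_map v w).symm
      rw [h1, PiLp.inner_apply]
      exact Finset.sum_congr rfl fun j _ => by rw [RCLike.inner_apply]; ring
    have hrepr : ∀ j, B.repr (T x) j = (μ j : ℂ) * B.repr x j := by
      intro j
      rw [B.repr_apply_apply, B.repr_apply_apply, ← hsymm (B j) x, hTB j, inner_smul_left,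
        Complex.conj_ofReal]
    have hx2 : ‖x‖ ^ 2 = ∑ j, Complex.normSq (B.repr x j) := by
      have h1 : RCLike.re (inner ℂ x x : ℂ) = ‖x‖ ^ 2 := inner_self_eq_norm_sq x
      rw [← h1, key x x, RCLike.re_to_complex, Complex.re_sum]
      refine Finset.sum_congr rfl fun j _ => ?_
      simp [Complex.mul_re, Complex.normSq_apply]
    have hAx : Complex.re (inner ℂ (T x) x : ℂ) = ∑ j, μ j * Complex.normSq (B.repr x j) := by
      rw [key, Complex.re_sum]
      refine Finset.sum_congr rfl fun j _ => ?_
      rw [hrepr j, map_mul, Complex.conj_ofReal, mul_assoc]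
      simp [Complex.mul_re, Complex.normSq_apply]
    rw [hx2, hAx, Finset.mul_sum]
    exact Finset.sum_le_sum fun j _ =>
      mul_le_mul_of_nonneg_right (hmin j (Finset.mem_univ j)) (Complex.normSq_nonneg _)

theorem dist_lower_bound_near_posdef {n : ℕ}
    (A : Matrix (Fin n) (Fin n) ℂ) (hA : A.PosDef) :
    ∃ δ > (0 : ℝ), ∃ c > (0 : ℝ),
      ∀ Atil : Matrix (Fin n) (Fin n) ℂ, ‖A - Atil‖ < δ →
        ∀ x y : EuclideanSpace ℂ (Fin n),
          inner ℂ (Matrix.toEuclideanLin Atil x) y = (0 : ℂ) →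
          ‖x - y‖ ^ 2 ≥ c * (‖x‖ ^ 2 + ‖y‖ ^ 2) := by
  obtain ⟨m, hm, hco⟩ := coercive A hA
  have hKpos : (0:ℝ) < ‖A‖ + 1 := by positivity
  set K := ‖A‖ + 1 with hKdef
  refine ⟨m / 2, by positivity, m ^ 2 / (8 * K ^ 2), by positivity,
    fun Atil hδ x y hxy => ?_⟩
  set T := Matrix.toEuclideanLin A with hTdef
  have hTn : ∀ v : EuclideanSpace ℂ (Fin n), ‖T v‖ ≤ K * ‖v‖ := fun v =>
    (norm_toEuclideanLin_le A v).trans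
      (mul_le_mul_of_nonneg_right (by simp [hKdef]) (norm_nonneg v))
  -- the cross term is small
  have hEx : (inner ℂ (T x) y : ℂ) = inner ℂ (Matrix.toEuclideanLin (A - Atil) x) y := by
    rw [map_sub, LinearMap.sub_apply, inner_sub_left, hxy, sub_zero]
  have hre : |(inner ℂ (T x) y : ℂ).re| ≤ m / 2 * (‖x‖ * ‖y‖) := by
    calc |(inner ℂ (T x) y : ℂ).re| ≤ ‖(inner ℂ (T x) y : ℂ)‖ := Complex.abs_re_le_norm _
      _ = ‖(inner ℂ (Matrix.toEuclideanLin (A - Atil) x) y : ℂ)‖ := by rw [hEx]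
      _ ≤ ‖Matrix.toEuclideanLin (A - Atil) x‖ * ‖y‖ := norm_inner_le_norm _ _
      _ ≤ (‖A - Atil‖ * ‖x‖) * ‖y‖ :=
        mul_le_mul_of_nonneg_right (norm_toEuclideanLin_le _ _) (norm_nonneg _)
      _ ≤ (m / 2 * ‖x‖) * ‖y‖ := by
        have h := hδ.le
        gcongr
      _ = m / 2 * (‖x‖ * ‖y‖) := by ring
  have hre2 : (inner ℂ (T x) y : ℂ).re ≤ m / 2 * (‖x‖ * ‖y‖) := le_of_abs_le hre
  have hre1 : -(m / 2 * (‖x‖ * ‖y‖)) ≤ (inner ℂ (T x) y : ℂ).re := neg_le_of_abs_le hre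
  -- bound on x
  have e1 : (inner ℂ (T x) x : ℂ).re
      = (inner ℂ (T x) (x - y) : ℂ).re + (inner ℂ (T x) y : ℂ).re := by
    rw [inner_sub_right, Complex.sub_re]; ring
  have e2 : (inner ℂ (T x) (x - y) : ℂ).re ≤ K * ‖x - y‖ * ‖x‖ := by
    calc (inner ℂ (T x) (x - y) : ℂ).re ≤ ‖(inner ℂ (T x) (x - y) : ℂ)‖ :=
          Complex.re_le_norm _
      _ ≤ ‖T x‖ * ‖x - y‖ := norm_inner_le_norm _ _
      _ ≤ (K * ‖x‖) * ‖x - y‖ :=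
          mul_le_mul_of_nonneg_right (hTn x) (norm_nonneg _)
      _ = K * ‖x - y‖ * ‖x‖ := by ring
  have h1 : m * ‖x‖ ^ 2 ≤ K * ‖x - y‖ * ‖x‖ + m / 2 * (‖x‖ * ‖y‖) :=
    (hco x).trans (e1.trans_le (add_le_add e2 hre2))
  -- bound on y
  have e1y : (inner ℂ (T y) y : ℂ).re
      = (inner ℂ (T x) y : ℂ).re - (inner ℂ (T (x - y)) y : ℂ).re := by
    rw [map_sub, inner_sub_left, Complex.sub_re]; ring
  have habs : |(inner ℂ (T (x - y)) y : ℂ).re| ≤ K * ‖x - y‖ * ‖y‖ := by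
    calc |(inner ℂ (T (x - y)) y : ℂ).re| ≤ ‖(inner ℂ (T (x - y)) y : ℂ)‖ :=
          Complex.abs_re_le_norm _
      _ ≤ ‖T (x - y)‖ * ‖y‖ := norm_inner_le_norm _ _
      _ ≤ (K * ‖x - y‖) * ‖y‖ :=
          mul_le_mul_of_nonneg_right (hTn _) (norm_nonneg _)
      _ = K * ‖x - y‖ * ‖y‖ := by ring
  have e2neg : -(K * ‖x - y‖ * ‖y‖) ≤ (inner ℂ (T (x - y)) y : ℂ).re :=
    neg_le_of_abs_le habs
  have h2 : m * ‖y‖ ^ 2 ≤ m / 2 * (‖x‖ * ‖y‖) + K * ‖x - y‖ * ‖y‖ :=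
    (hco y).trans (e1y.trans_le ((sub_le_sub hre2 e2neg).trans_eq (sub_neg_eq_add _ _)))
  exact arith_aux m K ‖x‖ ‖y‖ ‖x - y‖ hm hKpos h1 h2
end

section
/- Fix λ on the unit circle and a contractive analytic matrix function b on the disc. The set of vectors x ∈ ℂⁿ such that limsup over nontangential approach z → λ of (‖x‖² − ‖b(z)*x‖²)/(1 − |z|²) is finite, is a linear subspace of ℂⁿ. -/
open scoped Matrix.Norms.L2Operator Matrix

/-- The Stolz region `Γ_t(λ) = {z ∈ 𝔻 : |z − λ| < t(1 − |z|)}`. -/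
def stolzRegion (t : ℝ) (lam : ℂ) : Set ℂ :=
  {z : ℂ | ‖z‖ < 1 ∧ ‖z - lam‖ < t * (1 - ‖z‖)}

lemma euclid_apply_le {n : ℕ} (A : Matrix (Fin n) (Fin n) ℂ)
    (x : EuclideanSpace ℂ (Fin n)) :
    ‖Matrix.toEuclideanLin A x‖ ≤ ‖A‖ * ‖x‖ := by
  rw [Matrix.l2_opNorm_def]
  exact ((Matrix.toEuclideanLin.trans LinearMap.toContinuousLinearMap) A).le_opNorm x

lemma key_ineq {n : ℕ} (A : Matrix (Fin n) (Fin n) ℂ) (hA : ‖A‖ ≤ 1)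
    (x y : EuclideanSpace ℂ (Fin n)) :
    ‖x + y‖ ^ 2 - ‖Matrix.toEuclideanLin Aᴴ (x + y)‖ ^ 2 ≤
      2 * (‖x‖ ^ 2 - ‖Matrix.toEuclideanLin Aᴴ x‖ ^ 2) +
      2 * (‖y‖ ^ 2 - ‖Matrix.toEuclideanLin Aᴴ y‖ ^ 2) := by
  have hAH : ‖Aᴴ‖ ≤ 1 := by rw [Matrix.l2_opNorm_conjTranspose]; exact hA
  have hQ : ‖Matrix.toEuclideanLin Aᴴ (x - y)‖ ≤ ‖x - y‖ := by
    calc ‖Matrix.toEuclideanLin Aᴴ (x - y)‖ ≤ ‖Aᴴ‖ * ‖x - y‖ := euclid_apply_le _ _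
      _ ≤ 1 * ‖x - y‖ := by
          exact mul_le_mul_of_nonneg_right hAH (norm_nonneg _)
      _ = ‖x - y‖ := one_mul _
  have hp1 : ‖x + y‖ * ‖x + y‖ + ‖x - y‖ * ‖x - y‖
      = 2 * (‖x‖ * ‖x‖ + ‖y‖ * ‖y‖) := parallelogram_law_with_norm_mul ℂ x y
  have hLadd : Matrix.toEuclideanLin Aᴴ (x + y)
      = Matrix.toEuclideanLin Aᴴ x + Matrix.toEuclideanLin Aᴴ y := map_add _ _ _
  have hLsub : Matrix.toEuclideanLin Aᴴ (x - y)
      = Matrix.toEuclideanLin Aᴴ x - Matrix.toEuclideanLin Aᴴ y := map_sub _ _ _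
  have hp2 : ‖Matrix.toEuclideanLin Aᴴ x + Matrix.toEuclideanLin Aᴴ y‖ *
        ‖Matrix.toEuclideanLin Aᴴ x + Matrix.toEuclideanLin Aᴴ y‖ +
      ‖Matrix.toEuclideanLin Aᴴ x - Matrix.toEuclideanLin Aᴴ y‖ *
        ‖Matrix.toEuclideanLin Aᴴ x - Matrix.toEuclideanLin Aᴴ y‖
      = 2 * (‖Matrix.toEuclideanLin Aᴴ x‖ * ‖Matrix.toEuclideanLin Aᴴ x‖ +
          ‖Matrix.toEuclideanLin Aᴴ y‖ * ‖Matrix.toEuclideanLin Aᴴ y‖) :=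
    parallelogram_law_with_norm_mul ℂ _ _
  rw [hLadd]
  rw [hLsub] at hQ
  have hn1 : (0 : ℝ) ≤ ‖Matrix.toEuclideanLin Aᴴ x - Matrix.toEuclideanLin Aᴴ y‖ :=
    norm_nonneg _
  have hn2 : (0 : ℝ) ≤ ‖x - y‖ := norm_nonneg _
  nlinarith [sq_nonneg (‖x - y‖ - ‖Matrix.toEuclideanLin Aᴴ x - Matrix.toEuclideanLin Aᴴ y‖)]

theorem caratheodory_codirections_subspace {n : ℕ}
    (b : ℂ → Matrix (Fin n) (Fin n) ℂ)
    (hb : ∀ z ∈ Metric.ball (0 : ℂ) 1, ‖b z‖ ≤ 1)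
    (lam : ℂ) (hlam : ‖lam‖ = 1) (t : ℝ) (ht : 1 < t) :
    ∃ E : Submodule ℂ (EuclideanSpace ℂ (Fin n)),
      (E : Set (EuclideanSpace ℂ (Fin n))) =
        {x : EuclideanSpace ℂ (Fin n) |
          Filter.IsBoundedUnder (· ≤ ·) (nhdsWithin lam (stolzRegion t lam))
            (fun z : ℂ =>
              (‖x‖ ^ 2 - ‖Matrix.toEuclideanLin (b z)ᴴ x‖ ^ 2) / (1 - ‖z‖ ^ 2))} := by
  set l := nhdsWithin lam (stolzRegion t lam) with hl
  have hmem : stolzRegion t lam ∈ l := self_mem_nhdsWithin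
  refine ⟨{
    carrier := {x : EuclideanSpace ℂ (Fin n) |
      Filter.IsBoundedUnder (· ≤ ·) l
        (fun z : ℂ =>
          (‖x‖ ^ 2 - ‖Matrix.toEuclideanLin (b z)ᴴ x‖ ^ 2) / (1 - ‖z‖ ^ 2))}
    add_mem' := ?_
    zero_mem' := ?_
    smul_mem' := ?_ }, rfl⟩
  · rintro x y ⟨cx, hx⟩ ⟨cy, hy⟩
    refine ⟨2 * cx + 2 * cy, ?_⟩
    simp only [Filter.eventually_map] at hx hy ⊢
    filter_upwards [hx, hy, hmem] with z h1 h2 hz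
    have hz1 : ‖z‖ < 1 := hz.1
    have hd : (0 : ℝ) < 1 - ‖z‖ ^ 2 := by nlinarith [norm_nonneg z]
    have hbz : ‖b z‖ ≤ 1 := hb z (by simpa [Complex.dist_eq] using hz1)
    have hkey := key_ineq (b z) hbz x y
    calc (‖x + y‖ ^ 2 - ‖Matrix.toEuclideanLin (b z)ᴴ (x + y)‖ ^ 2) / (1 - ‖z‖ ^ 2)
        ≤ (2 * (‖x‖ ^ 2 - ‖Matrix.toEuclideanLin (b z)ᴴ x‖ ^ 2) +
            2 * (‖y‖ ^ 2 - ‖Matrix.toEuclideanLin (b z)ᴴ y‖ ^ 2)) / (1 - ‖z‖ ^ 2) :=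
          div_le_div_of_nonneg_right hkey hd.le |>.trans_eq rfl
      _ = 2 * ((‖x‖ ^ 2 - ‖Matrix.toEuclideanLin (b z)ᴴ x‖ ^ 2) / (1 - ‖z‖ ^ 2)) +
            2 * ((‖y‖ ^ 2 - ‖Matrix.toEuclideanLin (b z)ᴴ y‖ ^ 2) / (1 - ‖z‖ ^ 2)) := by
          ring
      _ ≤ 2 * cx + 2 * cy := by nlinarith
  · exact ⟨0, by simp⟩
  · rintro c x ⟨cx, hx⟩
    refine ⟨‖c‖ ^ 2 * cx, ?_⟩
    simp only [Filter.eventually_map] at hx ⊢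
    filter_upwards [hx] with z h1
    have heq : (‖c • x‖ ^ 2 - ‖Matrix.toEuclideanLin (b z)ᴴ (c • x)‖ ^ 2) /
        (1 - ‖z‖ ^ 2)
        = ‖c‖ ^ 2 *
          ((‖x‖ ^ 2 - ‖Matrix.toEuclideanLin (b z)ᴴ x‖ ^ 2) / (1 - ‖z‖ ^ 2)) := by
      rw [map_smul, norm_smul, norm_smul]
      ring
    rw [heq]
    exact mul_le_mul_of_nonneg_left h1 (by positivity)
end

section
/- If f is a bounded analytic function on the sector S_γ = {z ∈ ℂ : z ≠ 0, |z| < 1, |arg z| < γ} with 0 < γ ≤ π, and the radial limit lim_{x→0⁺} f(x) = a exists, then for every 0 < β < γ the limit of f(z) as z → 0 with z ∈ S_β equals a. -/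
set_option maxHeartbeats 1000000
set_option synthInstance.maxHeartbeats 1000000

open Complex Filter Set Metric BoundedContinuousFunction

lemma abs_arg_lt_iff' {c : ℝ} (hc0 : 0 ≤ c) (hcπ : c ≤ Real.pi) {z : ℂ} (hz : z ≠ 0) :
    |Complex.arg z| < c ↔ ‖z‖ * Real.cos c < z.re := by
  have ha : 0 < ‖z‖ := norm_pos_iff.mpr hz
  have h1 : Real.cos (Complex.arg z) = z.re / ‖z‖ := Complex.cos_arg hz
  have key := Real.strictAntiOn_cos.lt_iff_gt (⟨hc0, hcπ⟩ : c ∈ Set.Icc 0 Real.pi)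
    (⟨abs_nonneg _, Complex.abs_arg_le_pi z⟩ : |Complex.arg z| ∈ Set.Icc 0 Real.pi)
  rw [← key, Real.cos_abs, h1, lt_div_iff₀ ha, mul_comm]

lemma abs_arg_le_iff' {c : ℝ} (hc0 : 0 ≤ c) (hcπ : c ≤ Real.pi) {z : ℂ} (hz : z ≠ 0) :
    |Complex.arg z| ≤ c ↔ ‖z‖ * Real.cos c ≤ z.re := by
  have ha : 0 < ‖z‖ := norm_pos_iff.mpr hz
  have h1 : Real.cos (Complex.arg z) = z.re / ‖z‖ := Complex.cos_arg hz
  have key := Real.strictAntiOn_cos.le_iff_ge (⟨hc0, hcπ⟩ : c ∈ Set.Icc 0 Real.pi)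
    (⟨abs_nonneg _, Complex.abs_arg_le_pi z⟩ : |Complex.arg z| ∈ Set.Icc 0 Real.pi)
  rw [← key, Real.cos_abs, h1, le_div_iff₀ ha, mul_comm]

/-- The sector `S_γ = {z ∈ ℂ : z ≠ 0, |z| < 1, |arg z| < γ}`. -/
def sector (γ : ℝ) : Set ℂ :=
  {z : ℂ | z ≠ 0 ∧ ‖z‖ < 1 ∧ |Complex.arg z| < γ}

lemma isOpen_sector {γ : ℝ} (hγ0 : 0 < γ) (hγπ : γ ≤ Real.pi) : IsOpen (sector γ) := by
  have : sector γ = {z : ℂ | ‖z‖ < 1} ∩ {z : ℂ | ‖z‖ * Real.cos γ < z.re} := by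
    ext z
    constructor
    · rintro ⟨hz, h1, h2⟩
      exact ⟨h1, (abs_arg_lt_iff' hγ0.le hγπ hz).mp h2⟩
    · rintro ⟨h1, h2⟩
      have hz : z ≠ 0 := by
        rintro rfl
        simp at h2
      exact ⟨hz, h1, (abs_arg_lt_iff' hγ0.le hγπ hz).mpr h2⟩
  rw [this]
  exact (isOpen_lt continuous_norm continuous_const).inter
    (isOpen_lt (continuous_norm.mul continuous_const) Complex.continuous_re)

lemma scale_mem_sector {γ : ℝ} {t : ℝ} (ht0 : 0 < t) (ht1 : t ≤ 1) {z : ℂ}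
    (hz : z ∈ sector γ) : (t : ℂ) * z ∈ sector γ := by
  obtain ⟨hz0, hz1, hz2⟩ := hz
  refine ⟨mul_ne_zero (by exact_mod_cast ht0.ne') hz0, ?_, ?_⟩
  · rw [norm_mul, Complex.norm_of_nonneg ht0.le]
    calc t * ‖z‖ ≤ 1 * ‖z‖ := by
          exact mul_le_mul_of_nonneg_right ht1 (norm_nonneg z)
    _ = ‖z‖ := one_mul _
    _ < 1 := hz1
  · rwa [Complex.arg_real_mul z ht0]

lemma core_subseq (f : ℂ → ℂ) (γ : ℝ) (hγ0 : 0 < γ) (hγπ : γ ≤ Real.pi)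
    (hf : DifferentiableOn ℂ f (sector γ))
    (M : ℝ) (hM0 : 0 ≤ M) (hM : ∀ z ∈ sector γ, ‖f z‖ ≤ M)
    (a : ℂ)
    (hrad : Filter.Tendsto (fun x : ℝ => f (x : ℂ)) (nhdsWithin 0 (Set.Ioi 0)) (nhds a))
    (β : ℝ) (hβ0 : 0 < β) (hβγ : β < γ)
    (z : ℕ → ℂ) (hzβ : ∀ n, z n ∈ sector β) (hz2 : ∀ n, ‖z n‖ < 1/2)
    (hz0 : Filter.Tendsto z Filter.atTop (nhds 0)) :
    ∃ φ : ℕ → ℕ, StrictMono φ ∧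
      Filter.Tendsto (fun k => f (z (φ k))) Filter.atTop (nhds a) := by
  classical
  set c : ℝ := (β + γ)/2 with hc_def
  have hc0 : 0 < c := by positivity
  have hcβ : β < c := by rw [hc_def]; linarith
  have hcγ : c < γ := by rw [hc_def]; linarith
  have hcπ : c ≤ Real.pi := hcγ.le.trans hγπ
  set V : Set ℂ := {v : ℂ | 1/4 < ‖v‖ ∧ ‖v‖ < 3/4 ∧ |Complex.arg v| < c}
    with hV_def
  have hV0 : ∀ v ∈ V, v ≠ 0 := by
    rintro v hv rfl
    have h1 : (1:ℝ)/4 < ‖(0:ℂ)‖ := hv.1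
    norm_num at h1
  have hVγ : V ⊆ sector γ := fun v hv =>
    ⟨hV0 v hv, hv.2.1.trans (by norm_num), hv.2.2.trans hcγ⟩
  have hVopen : IsOpen V := by
    have hVeq : V = {v : ℂ | 1/4 < ‖v‖} ∩
        ({v : ℂ | ‖v‖ < 3/4} ∩ {v : ℂ | ‖v‖ * Real.cos c < v.re}) := by
      ext v
      simp only [hV_def, Set.mem_setOf_eq, Set.mem_inter_iff]
      constructor
      · rintro ⟨h1, h2, h3⟩
        have hv0 : v ≠ 0 := by rintro rfl; norm_num at h1
        exact ⟨h1, h2, (abs_arg_lt_iff' hc0.le hcπ hv0).mp h3⟩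
      · rintro ⟨h1, h2, h3⟩
        have hv0 : v ≠ 0 := by rintro rfl; norm_num at h1
        exact ⟨h1, h2, (abs_arg_lt_iff' hc0.le hcπ hv0).mpr h3⟩
    rw [hVeq]
    exact (isOpen_lt continuous_const continuous_norm).inter
      ((isOpen_lt continuous_norm continuous_const).inter
        (isOpen_lt (continuous_norm.mul continuous_const) Complex.continuous_re))
  set W : Set ℂ := {v : ℂ | 1/4 ≤ ‖v‖ ∧ ‖v‖ ≤ 3/4 ∧
      ‖v‖ * Real.cos c ≤ v.re} with hW_def
  have hWclosed : IsClosed W := by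
    have hWeq : W = {v : ℂ | 1/4 ≤ ‖v‖} ∩
        ({v : ℂ | ‖v‖ ≤ 3/4} ∩ {v : ℂ | ‖v‖ * Real.cos c ≤ v.re}) := by
      ext v; simp [hW_def, Set.mem_setOf_eq, and_assoc]
    rw [hWeq]
    exact (isClosed_le continuous_const continuous_norm).inter
      ((isClosed_le continuous_norm continuous_const).inter
        (isClosed_le (continuous_norm.mul continuous_const) Complex.continuous_re))
  have hVW : V ⊆ W := by
    intro v hv
    exact ⟨hv.1.le, hv.2.1.le, (abs_arg_le_iff' hc0.le hcπ (hV0 v hv)).mp hv.2.2.le⟩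
  have hWγ : W ⊆ sector γ := by
    intro v hv
    have hv0 : v ≠ 0 := by
      rintro rfl
      have := hv.1
      simp at this
      linarith
    exact ⟨hv0, lt_of_le_of_lt hv.2.1 (by norm_num),
      lt_of_le_of_lt ((abs_arg_le_iff' hc0.le hcπ hv0).mpr hv.2.2) hcγ⟩
  set CC : Set ℂ := closure V with hCC_def
  have hCW : CC ⊆ W := closure_minimal hVW hWclosed
  have hCγ : CC ⊆ sector γ := hCW.trans hWγ
  have hCcomp : IsCompact CC := by
    apply Metric.isCompact_of_isClosed_isBounded isClosed_closure
    apply Bornology.IsBounded.closure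
    apply (Metric.isBounded_closedBall (x := (0:ℂ)) (r := 1)).subset
    intro v hv
    rw [Metric.mem_closedBall, Complex.dist_eq, sub_zero]
    exact (hv.2.1.le.trans (by norm_num))
  set t : ℕ → ℝ := fun n => 2 * ‖z n‖ with ht_def
  have ht0 : ∀ n, 0 < t n := fun n => mul_pos two_pos (norm_pos_iff.mpr (hzβ n).1)
  have ht1 : ∀ n, t n < 1 := by
    intro n
    have h := hz2 n
    have he : t n = 2 * ‖z n‖ := rfl
    rw [he]
    linarith
  have htt : Filter.Tendsto t Filter.atTop (nhds 0) := by
    have h1 : Filter.Tendsto (fun n => ‖z n‖) Filter.atTop (nhds 0) := by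
      have := (continuous_norm.tendsto 0).comp hz0
      simpa [Function.comp_def] using this
    have := h1.const_mul 2
    simpa using this
  set g : ℕ → ℂ → ℂ := fun n v => f ((t n : ℂ) * v) with hg_def
  have hmaps : ∀ n, Set.MapsTo (fun v => (t n : ℂ) * v) (sector γ) (sector γ) :=
    fun n v hv => scale_mem_sector (ht0 n) (ht1 n).le hv
  have hgd : ∀ n, DifferentiableOn ℂ (g n) (sector γ) := fun n =>
    hf.comp (((differentiable_const _).mul differentiable_id).differentiableOn) (hmaps n)
  have hgb : ∀ n, ∀ v ∈ sector γ, ‖g n v‖ ≤ M := fun n v hv => hM _ (hmaps n hv)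
  obtain ⟨δ, hδ0, hδ⟩ := hCcomp.exists_thickening_subset_open (isOpen_sector hγ0 hγπ) hCγ
  set r : ℝ := δ/2 with hr_def
  have hr0 : 0 < r := by positivity
  have hball : ∀ x ∈ CC, Metric.ball x δ ⊆ sector γ := by
    intro x hx
    refine subset_trans ?_ hδ
    intro u hu
    exact Metric.mem_thickening_iff.mpr ⟨x, hx, hu⟩
  have hderiv : ∀ n, ∀ x ∈ CC, ∀ u ∈ Metric.ball x r, ‖deriv (g n) u‖ ≤ M / r := by
    intro n x hx u hu
    have hsub : Metric.closedBall u r ⊆ sector γ := by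
      intro v hv
      apply hball x hx
      rw [Metric.mem_closedBall] at hv
      rw [Metric.mem_ball] at hu ⊢
      calc dist v x ≤ dist v u + dist u x := dist_triangle v u x
        _ < r + r := by linarith
        _ = δ := by rw [hr_def]; ring
    have hd : DiffContOnCl ℂ (g n) (Metric.ball u r) := by
      apply DifferentiableOn.diffContOnCl
      rw [closure_ball u hr0.ne']
      exact (hgd n).mono hsub
    exact Complex.norm_deriv_le_of_forall_mem_sphere_norm_le hr0 hd
      (fun v hv => hgb n v (hsub (Metric.sphere_subset_closedBall hv)))
  have hlip : ∀ n, ∀ x ∈ CC, ∀ y ∈ CC,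
      dist (g n x) (g n y) ≤ (2*M/r) * dist x y := by
    intro n x hx y hy
    rcases lt_or_ge (dist y x) r with h | h
    · have hdiff : ∀ u ∈ Metric.ball x r, DifferentiableAt ℂ (g n) u := by
        intro u hu
        have : u ∈ sector γ := hball x hx (Metric.ball_subset_ball (by linarith) hu)
        exact (hgd n).differentiableAt ((isOpen_sector hγ0 hγπ).mem_nhds this)
      have hb : ∀ u ∈ Metric.ball x r, ‖deriv (g n) u‖ ≤ M/r :=
        fun u hu => hderiv n x hx u hu
      have key := (convex_ball x r).norm_image_sub_le_of_norm_deriv_le hdiff hb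
        (Metric.mem_ball_self hr0) (Metric.mem_ball.mpr h)
      rw [dist_eq_norm, dist_eq_norm]
      have hnn : (0:ℝ) ≤ ‖y - x‖ := norm_nonneg _
      have h2 : M/r * ‖y - x‖ ≤ 2*M/r * ‖y - x‖ := by
        apply mul_le_mul_of_nonneg_right _ hnn
        apply div_le_div_of_nonneg_right -- M ≤ 2*M
        · linarith
        · exact hr0.le
      rw [norm_sub_rev (g n x), norm_sub_rev x]
      exact key.trans h2
    · rw [dist_eq_norm]
      calc ‖g n x - g n y‖ ≤ ‖g n x‖ + ‖g n y‖ := norm_sub_le _ _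
        _ ≤ M + M := add_le_add (hgb n x (hCγ hx)) (hgb n y (hCγ hy))
        _ = (2*M/r) * r := by field_simp; ring
        _ ≤ (2*M/r) * dist x y := by
            apply mul_le_mul_of_nonneg_left _ (div_nonneg (by linarith) hr0.le)
            rw [dist_comm x y]
            exact h
  haveI : CompactSpace ↥CC := isCompact_iff_compactSpace.mp hCcomp
  set F : ℕ → (↥CC →ᵇ ℂ) := fun n => BoundedContinuousFunction.mkOfCompact
    ⟨CC.restrict (g n), (ContinuousOn.restrict (((hgd n).continuousOn).mono hCγ))⟩ with hF_def
  have hFcoe : ∀ n (x : ↥CC), F n x = g n ↑x := fun n x => rfl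
  set A : Set (↥CC →ᵇ ℂ) := Set.range F with hA_def
  have hequi : Equicontinuous ((↑) : A → ↥CC → ℂ) := by
    apply Metric.equicontinuous_of_continuity_modulus (fun d => (2*M/r)*d)
    · have hcont : Continuous fun d : ℝ => (2*M/r)*d := continuous_const.mul continuous_id
      simpa using hcont.tendsto 0
    · rintro x y ⟨i, n, hn⟩
      have : (⟨i, ⟨n, hn⟩⟩ : ↥A) = ⟨F n, ⟨n, rfl⟩⟩ := by simp [hn]
      rw [this]
      show dist (F n x) (F n y) ≤ 2*M/r * dist x y
      rw [hFcoe, hFcoe, Subtype.dist_eq]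
      exact hlip n ↑x x.2 ↑y y.2
  have hin : ∀ (ff : ↥CC →ᵇ ℂ) (x : ↥CC), ff ∈ A → ff x ∈ Metric.closedBall (0:ℂ) M := by
    rintro ff x ⟨n, rfl⟩
    rw [Metric.mem_closedBall, dist_zero_right]
    exact hgb n ↑x (hCγ x.2)
  have hAcomp : IsCompact (closure A) := BoundedContinuousFunction.arzela_ascoli
    (Metric.closedBall (0:ℂ) M) (isCompact_closedBall _ _) A hin hequi
  obtain ⟨G, hG, φ, hφ, hφt⟩ := hAcomp.tendsto_subseq
    (x := F) (fun n => subset_closure (Set.mem_range_self n))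
  have hunif : TendstoUniformly (fun k => ⇑(F (φ k))) ⇑G Filter.atTop :=
    BoundedContinuousFunction.tendsto_iff_tendstoUniformly.mp hφt
  set G' : ℂ → ℂ := fun v => if h : v ∈ CC then G ⟨v, h⟩ else 0 with hG'_def
  have hG'restr : ∀ x : ↥CC, G' ↑x = G x := by
    intro x
    rw [hG'_def]
    simp only [dif_pos x.2]
  have hunifOn : TendstoUniformlyOn (fun k => g (φ k)) G' Filter.atTop CC := by
    rw [tendstoUniformlyOn_iff_tendstoUniformly_comp_coe]
    have h1 : (fun (i : ℕ) (x : ↥CC) => g (φ i) ↑x) = fun i => ⇑(F (φ i)) := rfl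
    have h2 : (G' ∘ ((↑) : ↥CC → ℂ)) = ⇑G := funext fun x => hG'restr x
    rw [h2]
    exact hunif
  have hloc : TendstoLocallyUniformlyOn (fun k => g (φ k)) G' Filter.atTop V :=
    (hunifOn.mono subset_closure).tendstoLocallyUniformlyOn
  have hG'diff : DifferentiableOn ℂ G' V :=
    hloc.differentiableOn (Filter.Eventually.of_forall fun k => (hgd (φ k)).mono hVγ) hVopen
  have hXmem : ∀ x : ℝ, 1/3 < x → x < 2/3 → (x:ℂ) ∈ V := by
    intro x h1 h2
    have hx0 : 0 < x := by linarith
    refine ⟨?_, ?_, ?_⟩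
    · rw [Complex.norm_of_nonneg hx0.le]; linarith
    · rw [Complex.norm_of_nonneg hx0.le]; linarith
    · rw [Complex.arg_ofReal_of_nonneg hx0.le]
      simpa using hc0
  have hpt : ∀ x : ℝ, 1/3 < x → x < 2/3 → G' (x:ℂ) = a := by
    intro x h1 h2
    have hx0 : 0 < x := by linarith
    have hmem := hXmem x h1 h2
    have l1 : Filter.Tendsto (fun k => g (φ k) (x:ℂ)) Filter.atTop (nhds (G' x)) :=
      hunifOn.tendsto_at (subset_closure hmem)
    have l2 : Filter.Tendsto (fun k => g (φ k) (x:ℂ)) Filter.atTop (nhds a) := by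
      have hts : Filter.Tendsto (fun k => t (φ k) * x) Filter.atTop (nhdsWithin 0 (Set.Ioi 0)) := by
        rw [tendsto_nhdsWithin_iff]
        constructor
        · have := (htt.comp hφ.tendsto_atTop).mul_const x
          simpa using this
        · exact Filter.Eventually.of_forall fun k => mul_pos (ht0 _) hx0
      have := hrad.comp hts
      simpa [Function.comp_def, Complex.ofReal_mul] using this
    exact tendsto_nhds_unique l1 l2
  have hVpre : IsPreconnected V := by
    have himg : V = (fun p : ℝ × ℝ =>
        (p.1 : ℂ) * (Complex.cos (p.2:ℂ) + Complex.sin (p.2:ℂ) * Complex.I)) ''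
        (Set.Ioo (1/4:ℝ) (3/4) ×ˢ Set.Ioo (-c) c) := by
      ext v
      constructor
      · rintro ⟨h1, h2, h3⟩
        obtain ⟨h3a, h3b⟩ := abs_lt.mp h3
        exact ⟨(‖v‖, Complex.arg v), ⟨⟨h1, h2⟩, h3a, h3b⟩,
          Complex.norm_mul_cos_add_sin_mul_I v⟩
      · rintro ⟨⟨rr, θ⟩, ⟨⟨hr1, hr2⟩, hθ1, hθ2⟩, rfl⟩
        have hrr0 : 0 < rr := by linarith
        have habs1 : ‖Complex.cos (θ:ℂ) + Complex.sin (θ:ℂ) * Complex.I‖ = 1 :=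
          Complex.norm_cos_add_sin_mul_I θ
        have harg : Complex.arg ((rr:ℂ) *
            (Complex.cos (θ:ℂ) + Complex.sin (θ:ℂ) * Complex.I)) = θ := by
          rw [Complex.arg_real_mul _ hrr0]
          exact Complex.arg_cos_add_sin_mul_I ⟨by nlinarith [Real.pi_pos], by linarith⟩
        refine ⟨?_, ?_, ?_⟩
        · rw [norm_mul, Complex.norm_of_nonneg hrr0.le, habs1, mul_one]; exact hr1
        · rw [norm_mul, Complex.norm_of_nonneg hrr0.le, habs1, mul_one]; exact hr2
        · rw [harg, abs_lt]; exact ⟨hθ1, hθ2⟩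
    rw [himg]
    apply IsPreconnected.image
    · exact ((convex_Ioo _ _).prod (convex_Ioo _ _)).isPreconnected
    · apply Continuous.continuousOn
      exact (Complex.continuous_ofReal.comp continuous_fst).mul
        ((Complex.continuous_cos.comp (Complex.continuous_ofReal.comp continuous_snd)).add
          ((Complex.continuous_sin.comp (Complex.continuous_ofReal.comp continuous_snd)).mul
            continuous_const))
  have heq : Set.EqOn G' (fun _ => a) V := by
    have hanal : AnalyticOnNhd ℂ G' V := hG'diff.analyticOnNhd hVopen
    have hmem : ((1/2:ℝ):ℂ) ∈ V := hXmem (1/2) (by norm_num) (by norm_num)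
    apply hanal.eqOn_of_preconnected_of_frequently_eq analyticOnNhd_const hVpre hmem
    have hεk : ∀ k : ℕ, (0:ℝ) < 1/(12*((k:ℝ)+1)) := by
      intro k; positivity
    have hεk' : ∀ k : ℕ, (1:ℝ)/(12*((k:ℝ)+1)) ≤ 1/12 := by
      intro k
      apply div_le_div_of_nonneg_left (by norm_num) (by norm_num)
      nlinarith [Nat.cast_nonneg (α := ℝ) k]
    have hu : Filter.Tendsto (fun k : ℕ => ((1/2 + 1/(12*((k:ℝ)+1)) : ℝ) : ℂ)) Filter.atTop
        (nhdsWithin ((1/2:ℝ):ℂ) {((1/2:ℝ):ℂ)}ᶜ) := by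
      rw [tendsto_nhdsWithin_iff]
      constructor
      · have h12 : Filter.Tendsto (fun k : ℕ => (1/((k:ℝ)+1))) Filter.atTop (nhds 0) :=
          tendsto_one_div_add_atTop_nhds_zero_nat
        have h13 : Filter.Tendsto (fun k : ℕ => (1/(12*((k:ℝ)+1)))) Filter.atTop (nhds 0) := by
          have := h12.div_const 12
          simp only [zero_div] at this
          convert this using 2 with k
          field_simp
        have h14 : Filter.Tendsto (fun k : ℕ => (1/2 + 1/(12*((k:ℝ)+1)) : ℝ)) Filter.atTop
            (nhds (1/2)) := by
          have := tendsto_const_nhds (x := (1/2:ℝ)) (f := Filter.atTop (α := ℕ)) |>.add h13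
          simpa using this
        exact (Complex.continuous_ofReal.tendsto _).comp h14
      · apply Filter.Eventually.of_forall
        intro k
        simp only [Set.mem_compl_iff, Set.mem_singleton_iff]
        intro h
        have := Complex.ofReal_injective h
        have := hεk k
        linarith
    have hp : ∀ k : ℕ, G' (((1/2 + 1/(12*((k:ℝ)+1)) : ℝ)) : ℂ) = a := by
      intro k
      apply hpt
      · have := hεk k; linarith
      · have := hεk' k; linarith
    exact hu.frequently ((Filter.Eventually.of_forall hp).frequently)
  refine ⟨φ, hφ, ?_⟩
  set w : ℕ → ℂ := fun n => ((t n : ℂ))⁻¹ * z n with hw_def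
  have htne : ∀ n, (t n : ℂ) ≠ 0 := fun n => by
    exact_mod_cast (ht0 n).ne'
  have hw : ∀ n, (t n : ℂ) * w n = z n := by
    intro n
    show (t n : ℂ) * ((t n : ℂ)⁻¹ * z n) = z n
    rw [← mul_assoc, mul_inv_cancel₀ (htne n), one_mul]
  have hwV : ∀ n, w n ∈ V := by
    intro n
    have htn0 : (0:ℝ) < t n := ht0 n
    have habs : ‖w n‖ = 1/2 := by
      rw [hw_def]
      simp only [norm_mul, norm_inv, Complex.norm_of_nonneg htn0.le]
      have he : t n = 2 * ‖z n‖ := rfl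
      have hzn0 : ‖z n‖ ≠ 0 := (norm_pos_iff.mpr (hzβ n).1).ne'
      rw [he]
      field_simp
    have harg : Complex.arg (w n) = Complex.arg (z n) := by
      show Complex.arg ((t n : ℂ)⁻¹ * z n) = Complex.arg (z n)
      have hcast : ((t n:ℂ))⁻¹ = (((t n)⁻¹ : ℝ) : ℂ) := by push_cast; ring
      rw [hcast, Complex.arg_real_mul _ (inv_pos.mpr htn0)]
    refine ⟨by rw [habs]; norm_num, by rw [habs]; norm_num, ?_⟩
    rw [harg]
    exact (hzβ n).2.2.trans hcβ
  rw [Metric.tendsto_atTop]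
  intro ε hε
  obtain ⟨N, hN⟩ := Filter.eventually_atTop.mp ((Metric.tendstoUniformlyOn_iff.mp hunifOn) ε hε)
  refine ⟨N, fun k hk => ?_⟩
  have h1 := hN k hk (w (φ k)) (subset_closure (hwV (φ k)))
  have h2 : G' (w (φ k)) = a := heq (hwV (φ k))
  have h3 : g (φ k) (w (φ k)) = f (z (φ k)) := by
    show f ((t (φ k) : ℂ) * w (φ k)) = f (z (φ k))
    rw [hw]
  rw [← h3, dist_comm, ← h2]
  exact h1
theorem nontangential_limit_of_radial_limit
    (f : ℂ → ℂ) (γ : ℝ) (hγ0 : 0 < γ) (hγπ : γ ≤ Real.pi)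
    (hf : DifferentiableOn ℂ f (sector γ))
    (hbdd : ∃ M : ℝ, ∀ z ∈ sector γ, ‖f z‖ ≤ M)
    (a : ℂ)
    (hrad : Filter.Tendsto (fun x : ℝ => f (x : ℂ)) (nhdsWithin 0 (Set.Ioi 0)) (nhds a)) :
    ∀ β : ℝ, 0 < β → β < γ →
      Filter.Tendsto f (nhdsWithin 0 (sector β)) (nhds a) := by
  intro β hβ0 hβγ
  obtain ⟨M₀, hM₀⟩ := hbdd
  have hM : ∀ z ∈ sector γ, ‖f z‖ ≤ max M₀ 0 := fun z hz => (hM₀ z hz).trans (le_max_left _ _)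
  rw [Metric.tendsto_nhdsWithin_nhds]
  intro ε hε
  by_contra hcon
  push_neg at hcon
  have hbad : ∀ δ : ℝ, 0 < δ → ∃ x, x ∈ sector β ∧ dist x 0 < δ ∧ ε ≤ dist (f x) a := by
    intro δ hδ
    obtain ⟨x, hx1, hx2, hx3⟩ := hcon δ hδ
    exact ⟨x, hx1, hx2, hx3⟩
  choose zf hz1 hz2 hz3 using fun n : ℕ => hbad (min (1/2) (1/((n:ℝ)+1))) (by positivity)
  have habs : ∀ n, ‖zf n‖ < 1/2 := by
    intro n
    have h := hz2 n
    rw [Complex.dist_eq, sub_zero] at h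
    exact lt_of_lt_of_le h (min_le_left _ _)
  have hz0 : Filter.Tendsto zf Filter.atTop (nhds 0) := by
    apply tendsto_iff_dist_tendsto_zero.mpr
    apply squeeze_zero (fun n => dist_nonneg)
      (fun n => ((hz2 n).le.trans (min_le_right _ _)))
    exact tendsto_one_div_add_atTop_nhds_zero_nat
  obtain ⟨φ, hφ, hlim⟩ := core_subseq f γ hγ0 hγπ hf (max M₀ 0) (le_max_right _ _) hM a hrad
    β hβ0 hβγ zf hz1 habs hz0
  obtain ⟨N, hN⟩ := (Metric.tendsto_atTop.mp hlim) ε hε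
  exact absurd (hN N le_rfl) (not_lt.mpr (hz3 (φ N)))
end
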